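/- For 0 < λ < 1, a, b ∈ ℂ, b ≠ 0, and (a/b)λ^n ≠ -1 for all n: f(z) = Q_λ(a/b) Σ_{n=0}^∞ (bz)^n / (n! Q_λ((a/b)λ^n)) defines an entire function (the series converges for all z when |a/b| < 1) satisfying f'(z) = a f(λz) + b f(z) and f(0) = 1. -/

import Mathlib

set_option maxHeartbeats 1000000

open Complex Filter

lemma aux_log_bound {w : ℂ} {r : ℝ} (hw : ‖w‖ ≤ r) (hr : r < 1) :
    ‖Complex.log (1 + w)‖ ≤ (r * (1 - r)⁻¹ / 2 + 1) * ‖w‖ := by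
  have h1 : ‖w‖ < 1 := hw.trans_lt hr
  have h2 := Complex.norm_log_one_add_le h1
  have h3 : (1 - ‖w‖)⁻¹ ≤ (1 - r)⁻¹ := by
    apply inv_anti₀ <;> linarith
  have h4 : ‖w‖ ^ 2 * (1 - ‖w‖)⁻¹ / 2 ≤ r * (1 - r)⁻¹ / 2 * ‖w‖ := by
    have h5 : ‖w‖ ^ 2 * (1 - ‖w‖)⁻¹ ≤ (r * ‖w‖) * (1 - r)⁻¹ := by
      have hr0 : (0:ℝ) ≤ r := le_trans (norm_nonneg w) hw
      apply mul_le_mul _ h3 (inv_nonneg.mpr (by linarith)) (mul_nonneg hr0 (norm_nonneg w))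
      nlinarith [norm_nonneg w]
    nlinarith
  nlinarith [norm_nonneg w]

lemma aux_prod (lam : ℝ) (hlam0 : 0 < lam) (hlam1 : lam < 1) (α : ℂ) (hα : ‖α‖ < 1)
    (hne : ∀ k : ℕ, 1 + α * (lam : ℂ) ^ k ≠ 0) :
    Multipliable (fun k : ℕ => 1 + α * (lam : ℂ) ^ k) ∧
      (∏' k : ℕ, (1 + α * (lam : ℂ) ^ k)) ≠ 0 := by
  have hnl : ‖(lam : ℂ)‖ = lam := by
    rw [Complex.norm_real, Real.norm_of_nonneg hlam0.le]
  have hterm : ∀ k : ℕ, ‖α * (lam : ℂ) ^ k‖ = ‖α‖ * lam ^ k := by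
    intro k; rw [norm_mul, norm_pow, hnl]
  have htle : ∀ k : ℕ, ‖α * (lam : ℂ) ^ k‖ ≤ ‖α‖ := by
    intro k
    rw [hterm]
    calc ‖α‖ * lam ^ k ≤ ‖α‖ * 1 := by
          gcongr
          exact pow_le_one₀ hlam0.le hlam1.le
      _ = ‖α‖ := mul_one _
  have hlog : Summable (fun k : ℕ => Complex.log (1 + α * (lam : ℂ) ^ k)) := by
    apply Summable.of_norm_bounded
      (g := fun k => (‖α‖ * (1 - ‖α‖)⁻¹ / 2 + 1) * (‖α‖ * lam ^ k))
    · exact (((summable_geometric_of_lt_one hlam0.le hlam1).mul_left ‖α‖).mul_left _)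
    · intro k
      have := aux_log_bound (htle k) hα
      rwa [hterm] at this
  set F : ℕ → Unit → ℂ := fun k _ => 1 + α * (lam : ℂ) ^ k with hF
  have hfn : ∀ (x : Unit) k, F k x ≠ 0 := fun _ k => hne k
  have hfs : ∀ x : Unit, Summable fun k => Complex.log (F k x) := fun _ => hlog
  constructor
  · exact Complex.multipliable_of_summable_log hlog
  · have := Complex.cexp_tsum_eq_tprod hne hlog
    rw [← this]
    exact Complex.exp_ne_zero _

theorem pantograph_Q_series_solution (a b : ℂ) (hb : b ≠ 0)
    (lam : ℝ) (hlam0 : 0 < lam) (hlam1 : lam < 1)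
    (hnotpoly : ∀ n : ℕ, a / b * (lam : ℂ) ^ n ≠ -1)
    (hab : ‖a / b‖ < 1)
    (Q : ℂ → ℂ) (hQ : ∀ α : ℂ, Q α = ∏' k : ℕ, (1 + α * (lam : ℂ) ^ k))
    (f : ℂ → ℂ)
    (hf : ∀ z : ℂ, f z = Q (a / b) *
      ∑' n : ℕ, (b * z) ^ n / (n.factorial * Q (a / b * (lam : ℂ) ^ n))) :
    (∀ z : ℂ, Summable (fun n : ℕ => (b * z) ^ n / (n.factorial * Q (a / b * (lam : ℂ) ^ n)))) ∧
    f 0 = 1 ∧ ∀ z : ℂ, HasDerivAt f (a * f ((lam : ℂ) * z) + b * f z) z := by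
  set q : ℂ := a / b with hq_def
  have hnl : ‖(lam : ℂ)‖ = lam := by
    rw [Complex.norm_real, Real.norm_of_nonneg hlam0.le]
  have hlampow : ∀ n : ℕ, ‖(lam:ℂ)^n‖ ≤ 1 := by
    intro n; rw [norm_pow, hnl]; exact pow_le_one₀ hlam0.le hlam1.le
  have hαlt : ∀ n : ℕ, ‖q * (lam:ℂ)^n‖ < 1 := by
    intro n
    calc ‖q * (lam:ℂ)^n‖ ≤ ‖q‖ * 1 := by
          rw [norm_mul]; gcongr; exact hlampow n
      _ = ‖q‖ := mul_one _
      _ < 1 := hab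
  have hfac : ∀ n k : ℕ, 1 + (q * (lam:ℂ)^n) * (lam:ℂ)^k ≠ 0 := by
    intro n k h
    apply hnotpoly (n + k)
    have : q * (lam:ℂ)^(n+k) = -1 := by
      rw [pow_add, ← mul_assoc]
      linear_combination h
    exact this
  -- infinite product facts
  have hQm : ∀ n : ℕ, Multipliable (fun k : ℕ => 1 + (q * (lam:ℂ)^n) * (lam:ℂ)^k) :=
    fun n => (aux_prod lam hlam0 hlam1 _ (hαlt n) (hfac n)).1
  have hQne : ∀ n : ℕ, Q (q * (lam:ℂ)^n) ≠ 0 := by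
    intro n
    rw [hQ]
    exact (aux_prod lam hlam0 hlam1 _ (hαlt n) (hfac n)).2
  have hQqne : Q q ≠ 0 := by
    have := hQne 0
    simpa using this
  -- recurrence for Q
  have hQrec : ∀ n : ℕ,
      Q (q * (lam:ℂ)^n) = (1 + q * (lam:ℂ)^n) * Q (q * (lam:ℂ)^(n+1)) := by
    intro n
    rw [hQ, hQ]
    have hm : Multipliable (fun k : ℕ => 1 + (q * (lam:ℂ)^n) * (lam:ℂ)^(k+1)) :=
      (hQm (n+1)).congr (fun k => by ring)
    have h := tprod_eq_zero_mul' (f := fun k : ℕ => 1 + (q * (lam:ℂ)^n) * (lam:ℂ)^k) hm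
    rw [h]
    congr 1
    · simp
    · exact tprod_congr fun k => by ring
  -- coefficients
  set C : ℕ → ℂ := fun n => b ^ n / (n.factorial * Q (q * (lam:ℂ)^n)) with hC_def
  have ht : ∀ (n : ℕ) (z : ℂ),
      (b * z) ^ n / (n.factorial * Q (q * (lam:ℂ)^n)) = C n * z ^ n := by
    intro n z
    simp only [hC_def, mul_pow]
    ring
  have hfacne : ∀ n : ℕ, ((n.factorial : ℂ)) ≠ 0 := by
    intro n
    exact_mod_cast Nat.cast_ne_zero.mpr n.factorial_ne_zero
  have hCne : ∀ n : ℕ, C n ≠ 0 := by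
    intro n
    exact div_ne_zero (pow_ne_zero _ hb) (mul_ne_zero (hfacne n) (hQne n))
  have h1q : ∀ n : ℕ, (1 + q * (lam:ℂ)^n) ≠ 0 := by
    intro n h
    exact hnotpoly n (by linear_combination h)
  have hbq : b * q = a := by
    rw [hq_def]; field_simp
  have hCrec : ∀ n : ℕ, C (n+1) = C n * (b + a * (lam:ℂ)^n) / ((n:ℂ) + 1) := by
    intro n
    simp only [hC_def]
    rw [hQrec n, Nat.factorial_succ]
    push_cast
    have h2 := hQne (n+1)
    have h3 := h1q n
    have h4 := hfacne n
    have h5 : ((n:ℂ) + 1) ≠ 0 := by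
      have := Nat.cast_add_one_ne_zero (R := ℂ) n
      exact_mod_cast this
    have hba : b + a * (lam:ℂ)^n = b * (1 + q * (lam:ℂ)^n) := by
      rw [mul_add, mul_one, ← mul_assoc, hbq]
    rw [hba]
    field_simp
    ring
  -- norm helpers
  have hM : ∀ n : ℕ, ‖b + a * (lam:ℂ)^n‖ ≤ ‖b‖ + ‖a‖ := by
    intro n
    calc ‖b + a*(lam:ℂ)^n‖ ≤ ‖b‖ + ‖a * (lam:ℂ)^n‖ := norm_add_le _ _
      _ ≤ ‖b‖ + ‖a‖ * 1 := by rw [norm_mul]; gcongr; exact hlampow n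
      _ = ‖b‖ + ‖a‖ := by ring
  have hnorm_nat : ∀ n : ℕ, ‖((n:ℂ) + 1)‖ = (n:ℝ) + 1 := by
    intro n
    rw [show ((n:ℂ)+1) = ((n+1 : ℕ):ℂ) by push_cast; ring, Complex.norm_natCast]
    push_cast; ring
  -- summability of the power series
  have hsum : ∀ z : ℂ, Summable (fun n : ℕ => C n * z ^ n) := by
    intro z
    apply summable_of_ratio_norm_eventually_le (r := 1/2) (by norm_num)
    filter_upwards [eventually_ge_atTop ⌈2 * ((‖b‖ + ‖a‖) * ‖z‖)⌉₊] with n hn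
    have hge : 2 * ((‖b‖+‖a‖)*‖z‖) ≤ (n:ℝ) + 1 := by
      calc 2*((‖b‖+‖a‖)*‖z‖) ≤ (⌈2 * ((‖b‖ + ‖a‖) * ‖z‖)⌉₊ : ℝ) := Nat.le_ceil _
        _ ≤ (n:ℝ) := by exact_mod_cast hn
        _ ≤ (n:ℝ)+1 := by linarith
    have key : ‖C (n+1) * z^(n+1)‖
        = ‖C n * z^n‖ * (‖b + a*(lam:ℂ)^n‖ * ‖z‖ / ((n:ℝ)+1)) := by
      rw [hCrec n, pow_succ]
      rw [norm_mul, norm_mul, norm_div, norm_mul, norm_mul, hnorm_nat]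
      ring
    rw [key]
    have hb1 : ‖b + a*(lam:ℂ)^n‖ * ‖z‖ / ((n:ℝ)+1) ≤ 1/2 := by
      rw [div_le_iff₀ (by positivity)]
      have h7 : ‖b + a*(lam:ℂ)^n‖ * ‖z‖ ≤ (‖b‖+‖a‖) * ‖z‖ := by
        gcongr
        exact hM n
      nlinarith [hge, h7]
    calc ‖C n * z^n‖ * (‖b + a*(lam:ℂ)^n‖ * ‖z‖ / ((n:ℝ)+1))
        ≤ ‖C n * z^n‖ * (1/2) := by gcongr
      _ = 1/2 * ‖C n * z^n‖ := by ring
  -- f 0 = 1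
  have hf0 : f 0 = 1 := by
    rw [hf 0]
    have hts : (∑' n : ℕ, (b*0)^n/((n.factorial : ℂ) * Q (q*(lam:ℂ)^n))) = 1 / Q q := by
      rw [tsum_eq_single 0 ?_]
      · simp
      · intro n hn
        simp [zero_pow hn]
    rw [hts]
    field_simp
  refine ⟨fun z => (hsum z).congr fun n => (ht n z).symm, hf0, ?_⟩
  -- derivative
  intro z
  set R : ℝ := ‖z‖ + 1 with hR
  have hR0 : 0 < R := by positivity
  set u : ℕ → ℝ := fun n => ‖Q q‖ * ‖C n‖ * n * R^(n-1) with hu_def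
  have hu : Summable u := by
    apply summable_of_ratio_norm_eventually_le (r := 1/2) (by norm_num)
    filter_upwards [eventually_ge_atTop (max 1 ⌈2*((‖b‖+‖a‖)*R)⌉₊)] with n hn
    have hn1 : 1 ≤ n := le_of_max_le_left hn
    have hge : 2*((‖b‖+‖a‖)*R) ≤ (n:ℝ) := by
      calc 2*((‖b‖+‖a‖)*R) ≤ (⌈2*((‖b‖+‖a‖)*R)⌉₊:ℝ) := Nat.le_ceil _
        _ ≤ (n:ℝ) := by exact_mod_cast le_of_max_le_right hn
    have hCn1 : ‖C (n+1)‖ = ‖C n‖ * ‖b + a*(lam:ℂ)^n‖ / ((n:ℝ)+1) := by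
      rw [hCrec n, norm_div, norm_mul, hnorm_nat]
    have hval : u (n+1) = ‖Q q‖ * ‖C n‖ * ‖b + a*(lam:ℂ)^n‖ * (R * R^(n-1)) := by
      simp only [hu_def]
      rw [Nat.add_sub_cancel, hCn1]
      have hRn : R^n = R * R^(n-1) := by
        conv_lhs => rw [show n = (n-1)+1 by omega]
        rw [pow_succ]; ring
      rw [hRn]
      have h5 : ((n:ℝ)+1) ≠ 0 := by positivity
      push_cast
      field_simp
    have hun : ‖u n‖ = u n := Real.norm_of_nonneg (by positivity)
    have hun1 : ‖u (n+1)‖ = u (n+1) := Real.norm_of_nonneg (by positivity)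
    rw [hun, hun1, hval]
    have h6 : ‖b + a*(lam:ℂ)^n‖ * R ≤ (1/2) * n := by
      have h7 : ‖b + a*(lam:ℂ)^n‖ * R ≤ (‖b‖+‖a‖) * R := by
        gcongr
        exact hM n
      nlinarith [hge, h7]
    calc ‖Q q‖*‖C n‖*‖b + a*(lam:ℂ)^n‖*(R*R^(n-1))
        = (‖Q q‖*‖C n‖*R^(n-1))*(‖b + a*(lam:ℂ)^n‖*R) := by ring
      _ ≤ (‖Q q‖*‖C n‖*R^(n-1))*((1/2)*n) := by
          have hA : (0:ℝ) ≤ ‖Q q‖*‖C n‖*R^(n-1) := by positivity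
          exact mul_le_mul_of_nonneg_left h6 hA
      _ = 1/2*(‖Q q‖*‖C n‖*n*R^(n-1)) := by ring
  have hzball : z ∈ Metric.ball (0:ℂ) R := by
    rw [Metric.mem_ball, dist_zero_right]
    simp only [hR]
    linarith
  have hg : ∀ (n:ℕ) (y:ℂ), y ∈ Metric.ball (0:ℂ) R →
      HasDerivAt (fun w => Q q * C n * w^n) (Q q * C n * ((n:ℂ) * y^(n-1))) y :=
    fun n y _ => (hasDerivAt_pow n y).const_mul _
  have hg' : ∀ (n:ℕ) (y:ℂ), y ∈ Metric.ball (0:ℂ) R →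
      ‖Q q * C n * ((n:ℂ) * y^(n-1))‖ ≤ u n := by
    intro n y hy
    rw [Metric.mem_ball, dist_zero_right] at hy
    rw [norm_mul, norm_mul, norm_mul, norm_pow, Complex.norm_natCast]
    calc ‖Q q‖*‖C n‖*((n:ℝ)*‖y‖^(n-1)) ≤ ‖Q q‖*‖C n‖*((n:ℝ)*R^(n-1)) := by
          gcongr
      _ = u n := by simp only [hu_def]; ring
  have hg0 : Summable (fun n : ℕ => Q q * C n * (0:ℂ)^n) := by
    apply ((hsum 0).mul_left (Q q)).congr
    intro n
    ring
  have hder := hasDerivAt_tsum_of_isPreconnected hu Metric.isOpen_ball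
    (convex_ball (0:ℂ) R).isPreconnected hg hg' (Metric.mem_ball_self hR0) hg0 hzball
  have hfval : ∀ w : ℂ, f w = ∑' n : ℕ, Q q * (C n * w^n) := by
    intro w
    rw [hf w, ← tsum_mul_left]
    exact tsum_congr fun n => by rw [ht n w]
  have hfeq : (fun y : ℂ => ∑' n : ℕ, Q q * C n * y^n) = f := by
    funext y
    rw [hfval y]
    exact tsum_congr fun n => by ring
  rw [hfeq] at hder
  have hsum' : Summable (fun n : ℕ => Q q * C n * ((n:ℂ) * z^(n-1))) :=
    Summable.of_norm_bounded hu (fun n => hg' n z hzball)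
  have hD : (∑' n : ℕ, Q q * C n * ((n:ℂ) * z^(n-1))) = a * f ((lam:ℂ)*z) + b * f z := by
    rw [Summable.tsum_eq_zero_add hsum']
    simp only [Nat.cast_zero, zero_mul, mul_zero, zero_add, Nat.cast_add, Nat.cast_one,
      Nat.add_sub_cancel]
    have hterm : ∀ n : ℕ, Q q * C (n+1) * (((n:ℂ)+1) * z^n)
        = a * (Q q * (C n * ((lam:ℂ)*z)^n)) + b * (Q q * (C n * z^n)) := by
      intro n
      have h5 : ((n:ℂ)+1) ≠ 0 := by
        have := Nat.cast_add_one_ne_zero (R := ℂ) n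
        exact_mod_cast this
      rw [hCrec n, mul_pow]
      have hba : C n * (b + a * (lam:ℂ)^n) / ((n:ℂ)+1) * (((n:ℂ)+1)) = C n * (b + a*(lam:ℂ)^n) := by
        field_simp
      calc Q q * (C n * (b + a * (lam:ℂ)^n) / ((n:ℂ)+1)) * (((n:ℂ)+1) * z^n)
          = Q q * (C n * (b + a * (lam:ℂ)^n) / ((n:ℂ)+1) * (((n:ℂ)+1))) * z^n := by ring
        _ = Q q * (C n * (b + a*(lam:ℂ)^n)) * z^n := by rw [hba]
        _ = a * (Q q * (C n * ((lam:ℂ)^n*z^n))) + b * (Q q * (C n * z^n)) := by ring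
    rw [tsum_congr hterm]
    have S1 : Summable (fun n : ℕ => a * (Q q * (C n * ((lam:ℂ)*z)^n))) :=
      (((hsum ((lam:ℂ)*z)).mul_left (Q q)).mul_left a)
    have S2 : Summable (fun n : ℕ => b * (Q q * (C n * z^n))) :=
      (((hsum z).mul_left (Q q)).mul_left b)
    have hfval2 : ∀ w : ℂ, f w = Q q * ∑' n : ℕ, C n * w^n := by
      intro w
      rw [hf w]
      congr 1
      exact tsum_congr fun n => ht n w
    rw [Summable.tsum_add S1 S2, tsum_mul_left, tsum_mul_left, tsum_mul_left, tsum_mul_left,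
      ← hfval2, ← hfval2]
  rw [hD] at hder
  exact hder
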